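/- Let α be a type with decidable equality, next : α → Option α, and g : α. Suppose L = P ++ [b] ++ Q is a terminated chain of next from g, and let C = [c₁, …, c_k] be a nonempty duplicate-free list of fresh blocks, disjoint from L. Define the updated pointer function next' by: next' cⱼ = some cⱼ₊₁ for 1 ≤ j < k, next' c_k = next b, next' b = some c₁, and next' x = next x for every x not in C ∪ {b}. Then P ++ [b] ++ C ++ Q is a terminated chain of next' from g. That is, after performing the pointer updates of a successful update operation (creating the new blocks in reverse order and finally redirecting b to c₁), a read traversal returns exactly the original list with the new segment C spliced in immediately after b. -/

import Mathlib

/-- `L` is a terminated chain of the pointer function `next` starting from `g`: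
`L` is nonempty, starts at `g`, each element points to the following one,
and the last element points to `none`. -/
def TerminatedChain {α : Type*} (next : α → Option α) (g : α) (L : List α) : Prop :=
  L ≠ [] ∧ L.head? = some g ∧
  List.Chain' (fun a b => next a = some b) L ∧
  (∀ a ∈ L.getLast?, next a = none)

/-- A terminated chain from a given start is unique. -/
lemma terminatedChain_unique {α : Type*} (next : α → Option α) :
    ∀ (L₁ : List α) (g : α) (L₂ : List α),
      TerminatedChain next g L₁ → TerminatedChain next g L₂ → L₁ = L₂ := by
  intro L₁
  induction L₁ with
  | nil => intro g L₂ h _; exact absurd rfl h.1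
  | cons a t ih =>
    intro g L₂ h₁ h₂
    have ha : a = g := by simpa using h₁.2.1
    subst ha
    obtain ⟨a₂, t₂, rfl⟩ := List.exists_cons_of_ne_nil h₂.1
    have ha₂ : a₂ = a := by simpa using h₂.2.1
    subst ha₂
    match t, t₂ with
    | [], [] => rfl
    | [], y :: t₂' =>
      have hnone : next a₂ = none := h₁.2.2.2 a₂ (by simp)
      have hsome : next a₂ = some y := (List.isChain_cons_cons.mp h₂.2.2.1).1
      simp [hnone] at hsome
    | y :: t', [] =>
      have hnone : next a₂ = none := h₂.2.2.2 a₂ (by simp)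
      have hsome : next a₂ = some y := (List.isChain_cons_cons.mp h₁.2.2.1).1
      simp [hnone] at hsome
    | y :: t', y₂ :: t₂' =>
      have hy : next a₂ = some y := (List.isChain_cons_cons.mp h₁.2.2.1).1
      have hy₂ : next a₂ = some y₂ := (List.isChain_cons_cons.mp h₂.2.2.1).1
      have hyy : y = y₂ := by rw [hy] at hy₂; simpa using hy₂
      subst hyy
      have h₁' : TerminatedChain next y (y :: t') :=
        ⟨by simp, rfl, (List.isChain_cons_cons.mp h₁.2.2.1).2,
          fun x hx => h₁.2.2.2 x (by simpa [List.getLast?_cons_cons] using hx)⟩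
      have h₂' : TerminatedChain next y (y :: t₂') :=
        ⟨by simp, rfl, (List.isChain_cons_cons.mp h₂.2.2.1).2,
          fun x hx => h₂.2.2.2 x (by simpa [List.getLast?_cons_cons] using hx)⟩
      exact congrArg (a₂ :: ·) (ih y (y :: t₂') h₁' h₂')

/-- Any suffix of a terminated chain beginning at an occurrence `x` is a
terminated chain from `x`. -/
lemma terminatedChain_suffix {α : Type*} (next : α → Option α) {g x : α}
    {u v L : List α} (h : TerminatedChain next g L) (he : L = u ++ x :: v) :
    TerminatedChain next x (x :: v) := by
  refine ⟨by simp, rfl, h.2.2.1.suffix ⟨u, he.symm⟩, ?_⟩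
  intro a ha
  apply h.2.2.2
  rw [he, List.getLast?_append]
  simp only [Option.mem_def] at ha ⊢
  rw [ha]
  rfl

/-- The distinguished block occurs only once in a terminated chain. -/
lemma terminatedChain_not_mem {α : Type*} (next : α → Option α) {g b : α}
    {P Q : List α} (h : TerminatedChain next g (P ++ [b] ++ Q)) :
    b ∉ P ∧ b ∉ Q := by
  have hbase : TerminatedChain next b (b :: Q) :=
    terminatedChain_suffix next (u := P) (v := Q) h (by simp)
  constructor
  · intro hbP
    obtain ⟨P₁, P₂, rfl⟩ := List.append_of_mem hbP
    have h2 : TerminatedChain next b (b :: (P₂ ++ b :: Q)) :=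
      terminatedChain_suffix next (u := P₁) (v := P₂ ++ b :: Q) h (by simp)
    have := terminatedChain_unique next _ _ _ h2 hbase
    have hlen := congrArg List.length this
    simp at hlen
    omega
  · intro hbQ
    obtain ⟨Q₁, Q₂, rfl⟩ := List.append_of_mem hbQ
    have h2 : TerminatedChain next b (b :: Q₂) :=
      terminatedChain_suffix next (u := P ++ b :: Q₁) (v := Q₂) h
        (show _ = (P ++ b :: Q₁) ++ b :: Q₂ by simp)
    have := terminatedChain_unique next _ _ _ hbase h2
    have hlen := congrArg List.length this
    simp at hlen
    omega

/-- A chain property transfers along pointwise-agreeing pointer functions. -/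
lemma chain'_of_eq_on {α : Type*} (next next' : α → Option α) :
    ∀ (l : List α), (∀ x ∈ l, next' x = next x) →
      List.Chain' (fun a c => next a = some c) l →
      List.Chain' (fun a c => next' a = some c) l := by
  intro l
  induction l with
  | nil => intro _ _; simp [List.Chain']
  | cons a t ih =>
    intro hagree hch
    match t with
    | [] => simp [List.Chain']
    | y :: t' =>
      rw [List.Chain', List.isChain_cons_cons] at hch ⊢
      exact ⟨by rw [hagree a (by simp)]; exact hch.1,
        ih (fun x hx => hagree x (by simp [hx])) hch.2⟩

/-- Splicing a fresh segment `C` immediately after block `b` of a terminated chain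
(by creating the new blocks in reverse order and finally redirecting `b` to the head
of `C`) yields a terminated chain of the updated pointer function. -/
theorem terminatedChain_splice {α : Type*} [DecidableEq α]
    (next next' : α → Option α) (g b : α) (P Q C : List α)
    (hL : TerminatedChain next g (P ++ [b] ++ Q))
    (hCne : C ≠ []) (hCnodup : C.Nodup)
    (hdisj : ∀ x ∈ C, x ∉ P ++ [b] ++ Q)
    -- `next' cⱼ = some cⱼ₊₁` for consecutive elements of `C`
    (hC : List.Chain' (fun a c => next' a = some c) C)
    -- `next' c_k = next b` for the last element of `C`
    (hlast : ∀ a ∈ C.getLast?, next' a = next b)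
    -- `next' b = some c₁` for the head of `C`
    (hb : ∀ c ∈ C.head?, next' b = some c)
    -- `next'` agrees with `next` outside `C ∪ {b}`
    (hrest : ∀ x, x ∉ C → x ≠ b → next' x = next x) :
    TerminatedChain next' g (P ++ [b] ++ C ++ Q) := by
  obtain ⟨-, hhead, hchain, hterm⟩ := hL
  obtain ⟨hbP, hbQ⟩ := terminatedChain_not_mem next ⟨by simp, hhead, hchain, hterm⟩
  -- agreement of next' with next on P and on Q
  have hagreeP : ∀ x ∈ P, next' x = next x := fun x hx =>
    hrest x (fun hxC => hdisj x hxC (by simp [hx])) (fun hxb => hbP (hxb ▸ hx))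
  have hagreeQ : ∀ x ∈ Q, next' x = next x := fun x hx =>
    hrest x (fun hxC => hdisj x hxC (by simp [hx])) (fun hxb => hbQ (hxb ▸ hx))
  -- decompose the original chain
  rw [List.Chain', List.isChain_append, List.isChain_append] at hchain
  obtain ⟨⟨hchP, -, hjPb⟩, hchQ, hjbQ⟩ := hchain
  -- next b: points to head of Q, or none if Q is empty
  refine ⟨by simp, ?_, ?_, ?_⟩
  · -- head
    rw [List.head?_append, List.head?_append] at hhead ⊢
    rw [List.head?_append]
    simpa using hhead
  · -- chain
    rw [show P ++ [b] ++ C ++ Q = P ++ ([b] ++ (C ++ Q)) by simp,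
      List.Chain', List.isChain_append, List.isChain_append, List.isChain_append]
    refine ⟨chain'_of_eq_on next next' P hagreeP hchP, ⟨by simp, ⟨hC,
      chain'_of_eq_on next next' Q hagreeQ hchQ, ?_⟩, ?_⟩, ?_⟩
    · -- junction C → Q
      intro x hx y hy
      rw [hlast x hx]
      exact hjbQ b (by simp) y hy
    · -- junction b → C
      intro x hx y hy
      simp only [List.getLast?_singleton, Option.mem_def, Option.some.injEq] at hx
      subst hx
      rw [List.head?_append] at hy
      obtain ⟨c, C', rfl⟩ := List.exists_cons_of_ne_nil hCne
      simp only [List.head?_cons, Option.some_or, Option.mem_def,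
        Option.some.injEq] at hy
      subst hy
      exact hb c rfl
    · -- junction P → b
      intro x hx y hy
      simp only [List.head?_append, List.head?_cons, Option.some_or,
        Option.mem_def, Option.some.injEq] at hy
      subst hy
      have := hjPb x hx b (by simp)
      rw [hagreeP x (List.mem_of_mem_getLast? hx)]
      exact this
  · -- termination
    intro a ha
    rcases Q with _ | ⟨y, Q'⟩
    · -- Q = []
      have haC : a ∈ C.getLast? := by
        rw [show P ++ [b] ++ C ++ ([] : List α) = (P ++ [b]) ++ C by simp,
          List.getLast?_append_of_ne_nil _ hCne] at ha
        exact ha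
      rw [hlast a haC]
      exact hterm b (by simp)
    · -- Q = y :: Q'
      have haQ : a ∈ (y :: Q').getLast? := by
        rw [show P ++ [b] ++ C ++ (y :: Q') = (P ++ [b] ++ C) ++ (y :: Q') by simp,
          List.getLast?_append_of_ne_nil _ (by simp)] at ha
        exact ha
      rw [hagreeQ a (List.mem_of_mem_getLast? haQ)]
      exact hterm a (by
        rw [List.getLast?_append_of_ne_nil _ (show y :: Q' ≠ [] by simp)]
        exact haQ)
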